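/- Let n ≥ 1 and N be natural numbers with N even, and let δ : Fin n → ℕ satisfy ∑ i, δ i = N and 2 · δ i ≤ N for every i. Let b : Fin N → Fin n be the block function determined by δ (that is, b x = i exactly when ∑_{i' < i} δ i' ≤ x < ∑_{i' ≤ i} δ i'). Then there exists a fixed-point-free involution σ of Fin N such that: (i) b (σ x) ≠ b x for every x ∈ Fin N (no point is matched to a point of its own block), and (ii) the matching is non-crossing, i.e. there do not exist a, c ∈ Fin N with a < c < σ a < σ c. -/

import Mathlib

open Finset

private lemma exists_adj {N : ℕ} (P : Fin N → Prop) [DecidablePred P]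
    (hx : ∃ x, P x) (hy : ∃ y, ¬ P y) :
    ∃ k : ℕ, ∃ h : k + 1 < N,
      ((P ⟨k, by omega⟩ ∧ ¬ P ⟨k + 1, h⟩) ∨ (¬ P ⟨k, by omega⟩ ∧ P ⟨k + 1, h⟩)) := by
  obtain ⟨x, hxP⟩ := hx
  obtain ⟨y, hyP⟩ := hy
  have hN : 0 < N := x.pos
  by_contra hcon
  push_neg at hcon
  have step : ∀ k (h : k + 1 < N), P ⟨k, by omega⟩ ↔ P ⟨k + 1, h⟩ := by
    intro k h
    have := hcon k h
    tauto
  have all : ∀ i (h : i < N), P ⟨i, h⟩ ↔ P ⟨0, hN⟩ := by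
    intro i
    induction i with
    | zero => intro h; exact Iff.rfl
    | succ j ihj => intro h; rw [← step j h]; exact ihj (by omega)
  have h1 := all x.1 x.2
  have h2 := all y.1 y.2
  exact hyP (h2.mpr (h1.mp hxP))

private lemma card_interval (N A B : ℕ) (hB : B ≤ N) :
    (univ.filter fun x : Fin N => A ≤ x.1 ∧ x.1 < B).card = B - A := by
  have himg : (univ.filter fun x : Fin N => A ≤ x.1 ∧ x.1 < B).image Fin.val
      = Finset.Ico A B := by
    ext m
    simp only [mem_image, mem_filter, mem_univ, true_and, Finset.mem_Ico]
    constructor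
    · rintro ⟨x, ⟨h1, h2⟩, rfl⟩; exact ⟨h1, h2⟩
    · rintro ⟨h1, h2⟩; exact ⟨⟨m, by omega⟩, ⟨h1, h2⟩, rfl⟩
  rw [← Nat.card_Ico A B, ← himg, card_image_of_injective _ Fin.val_injective]

private lemma key (N : ℕ) : ∀ {α : Type} [DecidableEq α] (c : Fin N → α),
    Even N → (∀ a, 2 * (univ.filter fun x => c x = a).card ≤ N) →
    ∃ σ : Fin N → Fin N, Function.Involutive σ ∧ (∀ x, σ x ≠ x) ∧
      (∀ x, c (σ x) ≠ c x) ∧ ¬ ∃ p q : Fin N, p < q ∧ q < σ p ∧ σ p < σ q := by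
  induction N using Nat.strong_induction_on with
  | _ N IH =>
    intro α _ c hev hcount
    obtain _ | _ | N' := N
    · exact ⟨id, fun x => rfl, fun x => x.elim0, fun x => x.elim0,
        by rintro ⟨p, q, -⟩; exact p.elim0⟩
    · exact absurd hev (by decide)
    · classical
      have hNe : N' % 2 = 0 := by
        obtain ⟨r, hr⟩ := hev; omega
      -- a color of maximum count
      obtain ⟨m, hmim, hmmax⟩ := Finset.exists_max_image (univ.image c)
        (fun a => (univ.filter fun x => c x = a).card)
        ⟨c 0, mem_image_of_mem c (mem_univ 0)⟩
      have hmax' : ∀ a, (univ.filter fun x => c x = a).card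
          ≤ (univ.filter fun x => c x = m).card := by
        intro a
        by_cases ha : a ∈ univ.image c
        · exact hmmax a ha
        · have h0 : (univ.filter fun x => c x = a) = ∅ := by
            apply filter_eq_empty_iff.mpr
            intro x _ hx
            exact ha (mem_image.mpr ⟨x, mem_univ x, hx⟩)
          simp [h0]
      obtain ⟨xm, -, hxm⟩ := mem_image.mp hmim
      have hym : ∃ y, ¬ c y = m := by
        by_contra hall
        push_neg at hall
        have hfull : (univ.filter fun x => c x = m) = univ :=
          filter_eq_self.mpr fun x _ => hall x
        have hc := hcount m
        rw [hfull, card_univ, Fintype.card_fin] at hc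
        omega
      obtain ⟨k, hk, hone⟩ := exists_adj (fun x => c x = m) ⟨xm, hxm⟩ hym
      have hkN : k ≤ N' := by omega
      set K : Fin (N' + 2) := ⟨k, by omega⟩ with hKdef
      set K1 : Fin (N' + 2) := ⟨k + 1, hk⟩ with hK1def
      have hKval : K.1 = k := rfl
      have hK1val : K1.1 = k + 1 := rfl
      have hone' : (c K = m ∧ c K1 ≠ m) ∨ (c K ≠ m ∧ c K1 = m) := hone
      have hKK1 : K ≠ K1 := by
        intro h
        have := congrArg Fin.val h
        simp [hKval, hK1val] at this
      -- the order embedding skipping k, k+1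
      set e : Fin N' → Fin (N' + 2) := fun j =>
        if j.1 < k then ⟨j.1, by omega⟩ else ⟨j.1 + 2, by omega⟩ with hedef
      have heval : ∀ j : Fin N', (e j).1 = if j.1 < k then j.1 else j.1 + 2 := by
        intro j
        simp only [hedef]
        split <;> rfl
      have heltiff : ∀ j j' : Fin N', e j < e j' ↔ j < j' := by
        intro j j'
        simp only [Fin.lt_def, heval]
        split_ifs <;> omega
      have heinj : Function.Injective e := by
        intro j j' hjj'
        have hv := congrArg Fin.val hjj'
        rw [heval, heval] at hv
        apply Fin.ext
        split_ifs at hv <;> omega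
      have hene : ∀ j : Fin N', (e j).1 ≠ k ∧ (e j).1 ≠ k + 1 := by
        intro j
        rw [heval j]
        split_ifs with h <;> constructor <;> omega
      have him : ∀ x : Fin (N' + 2), (∃ j, e j = x) ↔ (x.1 ≠ k ∧ x.1 ≠ k + 1) := by
        intro x
        constructor
        · rintro ⟨j, rfl⟩; exact hene j
        · rintro ⟨h1, h2⟩
          by_cases hlt : x.1 < k
          · refine ⟨⟨x.1, by omega⟩, Fin.ext ?_⟩
            rw [heval]
            simp [hlt]
          · refine ⟨⟨x.1 - 2, by omega⟩, Fin.ext ?_⟩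
            rw [heval]
            show (if x.1 - 2 < k then x.1 - 2 else x.1 - 2 + 2) = x.1
            have hn : ¬ (x.1 - 2 < k) := by omega
            rw [if_neg hn]
            omega
      -- counts after removing K, K1
      set c' : Fin N' → α := fun j => c (e j) with hc'def
      have hcount' : ∀ a, 2 * (univ.filter fun j => c' j = a).card ≤ N' := by
        intro a
        have himg : (univ.filter fun j => c' j = a).image e
            = (univ.filter fun x => c x = a) \ {K, K1} := by
          ext x
          simp only [mem_image, mem_filter, mem_univ, true_and, mem_sdiff,
            mem_insert, mem_singleton]
          constructor
          · rintro ⟨j, hj, rfl⟩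
            refine ⟨hj, ?_⟩
            push_neg
            constructor
            · intro hK; exact (hene j).1 (congrArg Fin.val hK)
            · intro hK; exact (hene j).2 (congrArg Fin.val hK)
          · rintro ⟨hc, hx⟩
            push_neg at hx
            obtain ⟨j, rfl⟩ := (him x).mpr
              ⟨fun h => hx.1 (Fin.ext h), fun h => hx.2 (Fin.ext h)⟩
            exact ⟨j, hc, rfl⟩
        have hcard1 : (univ.filter fun j => c' j = a).card
            = ((univ.filter fun x => c x = a) \ {K, K1}).card := by
          rw [← himg, card_image_of_injective _ heinj]
        set T := univ.filter fun x : Fin (N' + 2) => c x = a with hT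
        have hcard2 : (T \ {K, K1}).card = T.card - (T ∩ {K, K1}).card := by
          rw [← Finset.sdiff_inter_self_left, card_sdiff_of_subset Finset.inter_subset_left]
        have h2T : 2 * T.card ≤ N' + 2 := hcount a
        rw [hcard1, hcard2]
        by_cases hu : 1 ≤ (T ∩ {K, K1}).card
        · omega
        · have hKa : c K ≠ a := by
            intro h
            exact hu (Finset.card_pos.mpr ⟨K, by simp [hT, h]⟩)
          have hK1a : c K1 ≠ a := by
            intro h
            exact hu (Finset.card_pos.mpr ⟨K1, by simp [hT, h]⟩)
          have ham : a ≠ m := by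
            rintro rfl
            rcases hone' with ⟨h, -⟩ | ⟨-, h⟩
            exacts [hKa h, hK1a h]
          suffices hsuff : 2 * T.card ≤ N' + 1 by omega
          by_contra hlarge
          push_neg at hlarge
          set Tm := univ.filter fun x : Fin (N' + 2) => c x = m with hTm
          have hdisj : Disjoint T Tm := by
            rw [Finset.disjoint_left]
            intro x hx hx'
            rw [hT, mem_filter] at hx
            rw [hTm, mem_filter] at hx'
            exact ham (hx.2 ▸ hx'.2 ▸ rfl)
          have hTle : T.card ≤ Tm.card := hmax' a
          have hTmle : 2 * Tm.card ≤ N' + 2 := hcount m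
          have hunion : T ∪ Tm = univ := by
            apply Finset.eq_univ_of_card
            rw [card_union_of_disjoint hdisj, Fintype.card_fin]
            omega
          rcases hone' with ⟨hcK, hcK1⟩ | ⟨hcK, hcK1⟩
          · have hmem : K1 ∈ T ∪ Tm := hunion ▸ mem_univ K1
            rcases mem_union.mp hmem with h | h
            · exact hK1a (mem_filter.mp h).2
            · exact hcK1 (mem_filter.mp h).2
          · have hmem : K ∈ T ∪ Tm := hunion ▸ mem_univ K
            rcases mem_union.mp hmem with h | h
            · exact hKa (mem_filter.mp h).2
            · exact hcK (mem_filter.mp h).2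
      have hevN' : Even N' := by
        obtain ⟨r, hr⟩ := hev
        exact ⟨r - 1, by omega⟩
      obtain ⟨σ', hσ'inv, hσ'fpf, hσ'col, hσ'nc⟩ := IH N' (by omega) c' hevN' hcount'
      -- build σ
      have hnoK : ¬ ∃ j, e j = K := by
        rintro ⟨j, hj⟩; exact (hene j).1 (congrArg Fin.val hj)
      have hnoK1 : ¬ ∃ j, e j = K1 := by
        rintro ⟨j, hj⟩; exact (hene j).2 (congrArg Fin.val hj)
      set σ : Fin (N' + 2) → Fin (N' + 2) := fun x =>
        if h : ∃ j, e j = x then e (σ' h.choose)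
        else if x.1 = k then K1 else K with hσdef
      have hσK : σ K = K1 := by
        simp only [hσdef]
        rw [dif_neg hnoK]
        simp [hKval]
      have hσK1 : σ K1 = K := by
        simp only [hσdef]
        rw [dif_neg hnoK1]
        simp [hK1val]
      have hσe : ∀ j, σ (e j) = e (σ' j) := by
        intro j
        simp only [hσdef]
        rw [dif_pos ⟨j, rfl⟩]
        have hch : (⟨j, rfl⟩ : ∃ j', e j' = e j).choose = j :=
          heinj (Exists.choose_spec (⟨j, rfl⟩ : ∃ j', e j' = e j))
        rw [hch]
      have hcases : ∀ x : Fin (N' + 2), x = K ∨ x = K1 ∨ ∃ j, e j = x := by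
        intro x
        by_cases h1 : x.1 = k
        · exact Or.inl (Fin.ext h1)
        by_cases h2 : x.1 = k + 1
        · exact Or.inr (Or.inl (Fin.ext h2))
        · exact Or.inr (Or.inr ((him x).mpr ⟨h1, h2⟩))
      refine ⟨σ, ?_, ?_, ?_, ?_⟩
      · intro x
        rcases hcases x with rfl | rfl | ⟨j, rfl⟩
        · rw [hσK, hσK1]
        · rw [hσK1, hσK]
        · rw [hσe, hσe, hσ'inv]
      · intro x
        rcases hcases x with rfl | rfl | ⟨j, rfl⟩
        · rw [hσK]; exact Ne.symm hKK1
        · rw [hσK1]; exact hKK1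
        · rw [hσe]
          intro h
          exact hσ'fpf j (heinj h)
      · intro x
        rcases hcases x with rfl | rfl | ⟨j, rfl⟩
        · rw [hσK]
          rcases hone' with ⟨h1, h2⟩ | ⟨h1, h2⟩
          · intro hh; exact h2 (by rw [hh, h1])
          · intro hh; exact h1 (by rw [← hh, h2])
        · rw [hσK1]
          rcases hone' with ⟨h1, h2⟩ | ⟨h1, h2⟩
          · intro hh; exact h2 (by rw [← hh, h1])
          · intro hh; exact h1 (by rw [hh, h2])
        · rw [hσe]
          exact hσ'col j
      · rintro ⟨p, q, h1, h2, h3⟩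
        rcases hcases p with rfl | rfl | ⟨j, rfl⟩
        · rw [hσK] at h2
          rw [Fin.lt_def] at h1 h2
          rw [hKval] at h1
          rw [hK1val] at h2
          omega
        · rw [hσK1] at h2
          rw [Fin.lt_def] at h1 h2
          rw [hK1val] at h1
          rw [hKval] at h2
          omega
        · rcases hcases q with rfl | rfl | ⟨j', rfl⟩
          · rw [hσK] at h3
            rw [hσe] at h2 h3
            rw [Fin.lt_def] at h2 h3
            rw [hKval] at h2
            rw [hK1val] at h3
            omega
          · rw [hσK1] at h3
            rw [hσe] at h2 h3
            rw [Fin.lt_def] at h2 h3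
            rw [hK1val] at h2
            rw [hKval] at h3
            omega
          · rw [hσe] at h2 h3
            rw [hσe] at h3
            exact hσ'nc ⟨j, j', (heltiff _ _).mp h1, (heltiff _ _).mp h2,
              (heltiff _ _).mp h3⟩

/-- Non-crossing perfect matching on `Fin N` avoiding matches inside the blocks
determined by the block-size function `δ : Fin n → ℕ`. -/
theorem stmt_0 (n N : ℕ) (hn : 1 ≤ n) (hNeven : Even N)
    (δ : Fin n → ℕ) (hsum : ∑ i, δ i = N) (hmax : ∀ i, 2 * δ i ≤ N)
    (b : Fin N → Fin n)
    (hb : ∀ (x : Fin N) (i : Fin n), b x = i ↔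
      (∑ i' ∈ Finset.univ.filter (fun i' => i' < i), δ i') ≤ (x : ℕ) ∧
      (x : ℕ) < ∑ i' ∈ Finset.univ.filter (fun i' => i' ≤ i), δ i') :
    ∃ σ : Fin N → Fin N,
      Function.Involutive σ ∧
      (∀ x, σ x ≠ x) ∧
      (∀ x, b (σ x) ≠ b x) ∧
      ¬ ∃ a c : Fin N, a < c ∧ c < σ a ∧ σ a < σ c := by
  classical
  have hcount_b : ∀ i : Fin n, 2 * (univ.filter fun x => b x = i).card ≤ N := by
    intro i
    have h1 : (univ.filter fun x => b x = i) = univ.filter fun x : Fin N =>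
        (∑ i' ∈ Finset.univ.filter (fun i' => i' < i), δ i') ≤ x.1 ∧
        x.1 < ∑ i' ∈ Finset.univ.filter (fun i' => i' ≤ i), δ i' :=
      filter_congr fun x _ => hb x i
    have hfe : Finset.univ.filter (fun i' => i' ≤ i)
        = insert i (Finset.univ.filter (fun i' => i' < i)) := by
      ext i'
      simp only [mem_filter, mem_univ, true_and, mem_insert]
      rw [Fin.le_def, Fin.lt_def, Fin.ext_iff]
      omega
    have hst : (∑ i' ∈ Finset.univ.filter (fun i' => i' ≤ i), δ i')
        = (∑ i' ∈ Finset.univ.filter (fun i' => i' < i), δ i') + δ i := by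
      rw [hfe, Finset.sum_insert (by simp)]
      exact add_comm _ _
    have htN : (∑ i' ∈ Finset.univ.filter (fun i' => i' ≤ i), δ i') ≤ N := by
      rw [← hsum]
      exact Finset.sum_le_sum_of_subset (filter_subset _ _)
    rw [h1, card_interval _ _ _ htN]
    have := hmax i
    omega
  obtain ⟨σ, hs1, hs2, hs3, hs4⟩ := key N b hNeven hcount_b
  exact ⟨σ, hs1, hs2, hs3, hs4⟩
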